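/- With notation as above (D0_1 < D0_2, D1_1 > D1_2, all positive), define δ = D0_1·D0_2·(D1_2 - D1_1) / (D1_1·D1_2·(D0_1 - D0_2)). Then δ > 0, G1(δ) = G2(δ), and δ ∈ (U, V) where U and V are the endpoints defined by U = D0_1(D1_1-D1_2)(D0_1+D0_2)/(D1_1(D1_1+D1_2)(D0_2-D0_1)) and V = D0_2(D1_1-D1_2)(D0_1+D0_2)/(D1_2(D1_1+D1_2)(D0_2-D0_1)). -/

import Mathlib

/-- The crossover prior ratio δ is positive, equalizes the two stationary costs,
and lies in the interval (U, V). -/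
theorem stmt_9 (D01 D02 D11 D12 : ℝ)
    (h01 : 0 < D01) (h02 : 0 < D02) (h11 : 0 < D11) (h12 : 0 < D12)
    (h0 : D01 < D02) (h1 : D11 > D12) :
    0 < D01 * D02 * (D12 - D11) / (D11 * D12 * (D01 - D02)) ∧
    (D01 * D02 * (D12 - D11) / (D11 * D12 * (D01 - D02))) / D01 + 1 / D11 =
      (D01 * D02 * (D12 - D11) / (D11 * D12 * (D01 - D02))) / D02 + 1 / D12 ∧
    D01 * (D11 - D12) * (D01 + D02) / (D11 * (D11 + D12) * (D02 - D01)) <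
      D01 * D02 * (D12 - D11) / (D11 * D12 * (D01 - D02)) ∧
    D01 * D02 * (D12 - D11) / (D11 * D12 * (D01 - D02)) <
      D02 * (D11 - D12) * (D01 + D02) / (D12 * (D11 + D12) * (D02 - D01)) := by
  have hden : (0:ℝ) < D11 * D12 * (D02 - D01) := by
    have := sub_pos.mpr h0; positivity
  have hden' : D11 * D12 * (D01 - D02) ≠ 0 := by nlinarith
  have key : D01 * D02 * (D12 - D11) / (D11 * D12 * (D01 - D02)) =
      D01 * D02 * (D11 - D12) / (D11 * D12 * (D02 - D01)) := by
    rw [div_eq_div_iff hden' (ne_of_gt hden)]; ring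
  have h1' := sub_pos.mpr h1
  have h0' := sub_pos.mpr h0
  refine ⟨?_, ?_, ?_, ?_⟩
  · rw [key]; positivity
  · have hne : D01 - D02 ≠ 0 := by linarith
    field_simp
    ring
  · rw [key, div_lt_div_iff₀ (by positivity) hden]
    nlinarith [mul_pos h01 h11, mul_pos (mul_pos h01 h11) (mul_pos h1' h0'),
      mul_lt_mul'' h0 h1 h01.le h12.le]
  · rw [key, div_lt_div_iff₀ hden (by positivity)]
    nlinarith [mul_pos h02 h12, mul_pos (mul_pos h02 h12) (mul_pos h1' h0'),
      mul_lt_mul'' h0 h1 h01.le h12.le]
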